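/- Fix a subset A ⊆ Hom_K(F, K̄) and a finite extension E of K inside K̄ containing E_A. Then the Eisenstein ideal admits the description J_A = ker[ O_F ⊗_{O_K} O_E → ∏_{φ∈A} K̄ ], where the φ-component of the map sends a ⊗ e to φ(a)·e ∈ K̄ (using the inclusions φ(F) ⊆ K̄ and E ⊆ K̄). -/

import Mathlib

open scoped TensorProduct Polynomial

set_option synthInstance.maxHeartbeats 400000
set_option maxHeartbeats 1000000

noncomputable section

variable (p : ℕ) [Fact p.Prime]

/-- The ring of integers of a `p`-adic field `L`: the integral closure of `ℤₚ` in `L`. -/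
def RInt (L : Type) [Field L] [Algebra ℤ_[p] L] : Type := ↥(integralClosure ℤ_[p] L)

local instance instCR (L : Type) [Field L] [Algebra ℤ_[p] L] : CommRing (RInt p L) :=
  inferInstanceAs (CommRing ↥(integralClosure ℤ_[p] L))

local instance instAlgL (L : Type) [Field L] [Algebra ℤ_[p] L] : Algebra (RInt p L) L :=
  inferInstanceAs (Algebra ↥(integralClosure ℤ_[p] L) L)

/-- Functoriality of rings of integers. -/
def RIntMap (L L' : Type) [Field L] [Field L'] [Algebra ℤ_[p] L] [Algebra ℤ_[p] L']
    (f : L →ₐ[ℤ_[p]] L') : RInt p L →+* RInt p L' :=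
  show ↥(integralClosure ℤ_[p] L) →+* ↥(integralClosure ℤ_[p] L') from
  { toFun := fun x => ⟨f x, IsIntegral.map f x.2⟩
    map_one' := by ext; simp
    map_mul' := fun x y => by ext; simp
    map_zero' := by ext; simp
    map_add' := fun x y => by ext; simp }

section Galois

variable (K F : Type) [Field K] [Field F] [Algebra K F]

/-- The stabilizer of a finite set of embeddings `F →ₐ[K] K̄` inside `Gal(K̄/K)`:
the set of `σ` with `σ ∘ S = S`. -/
def galStab (S : Finset (F →ₐ[K] AlgebraicClosure K)) :
    Subgroup (AlgebraicClosure K ≃ₐ[K] AlgebraicClosure K) := by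
  letI := Classical.decEq (F →ₐ[K] AlgebraicClosure K)
  exact
  { carrier := {σ | S.image (fun φ =>
        ((σ : AlgebraicClosure K →ₐ[K] AlgebraicClosure K)).comp φ) = S}
    one_mem' := by
      have h : (fun φ : F →ₐ[K] AlgebraicClosure K =>
          (((1 : AlgebraicClosure K ≃ₐ[K] AlgebraicClosure K) :
            AlgebraicClosure K →ₐ[K] AlgebraicClosure K)).comp φ) = id := by
        funext φ; exact AlgHom.ext fun x => rfl
      simp only [Set.mem_setOf_eq, h, Finset.image_id]
    mul_mem' := by
      intro σ τ hσ hτ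
      simp only [Set.mem_setOf_eq] at hσ hτ ⊢
      have h : (fun φ : F →ₐ[K] AlgebraicClosure K =>
          (((σ * τ : AlgebraicClosure K ≃ₐ[K] AlgebraicClosure K) :
            AlgebraicClosure K →ₐ[K] AlgebraicClosure K)).comp φ)
          = (fun φ => ((σ : AlgebraicClosure K →ₐ[K] AlgebraicClosure K)).comp φ) ∘
            (fun φ => ((τ : AlgebraicClosure K →ₐ[K] AlgebraicClosure K)).comp φ) := by
        funext φ; exact AlgHom.ext fun x => rfl
      rw [h, ← Finset.image_image, hτ, hσ]
    inv_mem' := by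
      intro σ hσ
      simp only [Set.mem_setOf_eq] at hσ ⊢
      conv_lhs => rw [← hσ]
      rw [Finset.image_image]
      have h : ((fun φ : F →ₐ[K] AlgebraicClosure K =>
          (((σ⁻¹ : AlgebraicClosure K ≃ₐ[K] AlgebraicClosure K) :
            AlgebraicClosure K →ₐ[K] AlgebraicClosure K)).comp φ) ∘
          (fun φ => ((σ : AlgebraicClosure K →ₐ[K] AlgebraicClosure K)).comp φ)) = id := by
        funext φ
        exact AlgHom.ext fun x => σ.symm_apply_apply (φ x)
      rw [h, Finset.image_id] }

/-- The reflex field `E_S ⊆ K̄` of a set `S` of embeddings `F →ₐ[K] K̄`: the fixed field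
of its stabilizer in `Gal(K̄/K)`. -/
def reflexField (S : Finset (F →ₐ[K] AlgebraicClosure K)) :
    IntermediateField K (AlgebraicClosure K) :=
  IntermediateField.fixedField (galStab K F S)

end Galois

section Eis

/- `K` is a finite extension of `ℚₚ` (with its induced `ℤₚ`-algebra structure), `F` is a
finite extension of `K`, and `E` is a further finite extension of `K` equipped with a
`K`-embedding `ιE : E → K̄` realizing it as a subfield of an algebraic closure of `K`. -/
variable (K : Type) [Field K] [Algebra ℚ_[p] K] [FiniteDimensional ℚ_[p] K]
  [Algebra ℤ_[p] K] [IsScalarTower ℤ_[p] ℚ_[p] K]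
variable (F : Type) [Field F] [Algebra K F] [FiniteDimensional K F]
  [Algebra ℤ_[p] F] [IsScalarTower ℤ_[p] K F]
variable (E : Type) [Field E] [Algebra K E] [Algebra ℤ_[p] E] [IsScalarTower ℤ_[p] K E]

local instance algOKOF : Algebra (RInt p K) (RInt p F) :=
  (RIntMap p K F (IsScalarTower.toAlgHom ℤ_[p] K F)).toAlgebra

local instance algOKOE : Algebra (RInt p K) (RInt p E) :=
  (RIntMap p K E (IsScalarTower.toAlgHom ℤ_[p] K E)).toAlgebra

variable (ιE : E →ₐ[K] AlgebraicClosure K)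

/-- The canonical map `O_E → K̄` induced by `ιE : E → K̄`. -/
def OEtoKb : RInt p E →+* AlgebraicClosure K :=
  (ιE : E →+* AlgebraicClosure K).comp (algebraMap (RInt p E) E)

/-- `Q ∈ O_E[T]` represents the Eisenstein polynomial `e_{ζ,S}(T) = ∏_{φ ∈ S} (T - φ(ζ))`. -/
def IsEisPoly (S : Finset (F →ₐ[K] AlgebraicClosure K)) (ζ : RInt p F)
    (Q : Polynomial (RInt p E)) : Prop :=
  Q.map (OEtoKb p K E ιE) =
    ∏ φ ∈ S, (Polynomial.X - Polynomial.C (φ (algebraMap (RInt p F) F ζ)))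

variable (R : Type) [CommRing R] [Algebra (RInt p K) R] [Algebra (RInt p E) R]

/-- The element `e_S = e_{ζ,S}(ζ ⊗ 1)` of `O_F ⊗_{O_K} R`, where `Q ∈ O_E[T]`
represents the Eisenstein polynomial `e_{ζ,S}(T)`. -/
def eElt (Q : Polynomial (RInt p E)) (ζ : RInt p F) : (RInt p F) ⊗[RInt p K] R :=
  Polynomial.eval₂
    ((Algebra.TensorProduct.includeRight :
        R →ₐ[RInt p K] (RInt p F) ⊗[RInt p K] R).toRingHom.comp (algebraMap (RInt p E) R))
    (ζ ⊗ₜ[RInt p K] (1 : R)) Q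

/-- The Eisenstein ideal `J_{S,R} ⊆ O_F ⊗_{O_K} R`, generated by `e_S`. -/
def JIdeal (Q : Polynomial (RInt p E)) (ζ : RInt p F) :
    Ideal ((RInt p F) ⊗[RInt p K] R) :=
  Ideal.span {eElt p K F E R Q ζ}

local instance algOKKb : Algebra (RInt p K) (AlgebraicClosure K) :=
  ((algebraMap K (AlgebraicClosure K)).comp (algebraMap (RInt p K) K)).toAlgebra

/-- The restriction of an embedding `φ : F →ₐ[K] K̄` to the ring of integers, as an
`O_K`-algebra homomorphism `O_F →ₐ[O_K] K̄`. -/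
def embToKb (φ : F →ₐ[K] AlgebraicClosure K) : RInt p F →ₐ[RInt p K] AlgebraicClosure K where
  toRingHom := (φ : F →+* AlgebraicClosure K).comp (algebraMap (RInt p F) F)
  commutes' := fun r => by
    have h1 : (algebraMap (RInt p F) F) ((algebraMap (RInt p K) (RInt p F)) r)
        = algebraMap K F ((algebraMap (RInt p K) K) r) := by
      show algebraMap K F ((IsScalarTower.toAlgHom ℤ_[p] K K) ((algebraMap (RInt p K) K) r)) = _
      rfl
    show φ ((algebraMap (RInt p F) F) ((algebraMap (RInt p K) (RInt p F)) r)) = _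
    rw [h1, φ.commutes]
    rfl

/-- The inclusion `O_E → K̄` as an `O_K`-algebra homomorphism. -/
def oEToKb : RInt p E →ₐ[RInt p K] AlgebraicClosure K where
  toRingHom := OEtoKb p K E ιE
  commutes' := fun r => by
    have h1 : (algebraMap (RInt p E) E) ((algebraMap (RInt p K) (RInt p E)) r)
        = algebraMap K E ((algebraMap (RInt p K) K) r) := by
      show algebraMap K E ((IsScalarTower.toAlgHom ℤ_[p] K K) ((algebraMap (RInt p K) K) r)) = _
      rfl
    show ιE ((algebraMap (RInt p E) E) ((algebraMap (RInt p K) (RInt p E)) r)) = _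
    rw [h1, ιE.commutes]
    rfl

/-- The map `O_F ⊗_{O_K} O_E → K̄` whose value on `a ⊗ e` is `φ(a)·e`. -/
def phiComponent (φ : F →ₐ[K] AlgebraicClosure K) :
    (RInt p F) ⊗[RInt p K] (RInt p E) →ₐ[RInt p K] AlgebraicClosure K :=
  Algebra.TensorProduct.productMap (embToKb p K F φ) (oEToKb p K E ιE)

/-- Evaluation of a polynomial over `O_E` at `ζ ⊗ 1` in `O_F ⊗ O_E`. -/
def tensorEval (ζ : RInt p F) (g : Polynomial (RInt p E)) :
    (RInt p F) ⊗[RInt p K] (RInt p E) :=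
  Polynomial.eval₂
    ((Algebra.TensorProduct.includeRight :
        (RInt p E) →ₐ[RInt p K] (RInt p F) ⊗[RInt p K] (RInt p E)).toRingHom.comp
      (algebraMap (RInt p E) (RInt p E)))
    (ζ ⊗ₜ[RInt p K] (1 : RInt p E)) g

lemma OEtoKb_injective : Function.Injective (OEtoKb p K E ιE) := by
  intro a b h
  have h2 : (algebraMap (RInt p E) E) a = algebraMap (RInt p E) E b :=
    (ιE : E →+* AlgebraicClosure K).injective h
  exact Subtype.ext h2

lemma emb_eq_of_eq_at (ζ : RInt p F) (hζ : Algebra.adjoin (RInt p K) {ζ} = ⊤)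
    (φ ψ : F →ₐ[K] AlgebraicClosure K)
    (h : φ (algebraMap (RInt p F) F ζ) = ψ (algebraMap (RInt p F) F ζ)) : φ = ψ := by
  have hOF : ∀ a : RInt p F,
      φ (algebraMap (RInt p F) F a) = ψ (algebraMap (RInt p F) F a) := by
    intro a
    have hsub : Algebra.adjoin (RInt p K) {ζ} ≤
        AlgHom.equalizer (embToKb p K F φ) (embToKb p K F ψ) := by
      rw [Algebra.adjoin_le_iff]
      intro x hx
      rw [Set.mem_singleton_iff] at hx
      subst hx
      exact h
    have ha : a ∈ AlgHom.equalizer (embToKb p K F φ) (embToKb p K F ψ) :=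
      hsub (hζ.symm ▸ Algebra.mem_top)
    exact ha
  letI : Algebra ℚ_[p] F := ((algebraMap K F).comp (algebraMap ℚ_[p] K)).toAlgebra
  haveI : IsScalarTower ℚ_[p] K F := IsScalarTower.of_algebraMap_eq fun r => rfl
  haveI : IsScalarTower ℤ_[p] ℚ_[p] F := IsScalarTower.of_algebraMap_eq fun r => by
    show algebraMap ℤ_[p] F r = algebraMap K F (algebraMap ℚ_[p] K (algebraMap ℤ_[p] ℚ_[p] r))
    rw [← IsScalarTower.algebraMap_apply ℤ_[p] ℚ_[p] K,
      IsScalarTower.algebraMap_apply ℤ_[p] K F]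
  haveI : FiniteDimensional ℚ_[p] F := Module.Finite.trans K F
  have hinjZF : Function.Injective (algebraMap ℤ_[p] F) := by
    rw [IsScalarTower.algebraMap_eq ℤ_[p] ℚ_[p] F]
    exact (algebraMap ℚ_[p] F).injective.comp (IsFractionRing.injective ℤ_[p] ℚ_[p])
  ext x
  have halg : IsAlgebraic ℤ_[p] x := by
    rw [IsFractionRing.isAlgebraic_iff ℤ_[p] ℚ_[p] F]
    exact Algebra.IsAlgebraic.isAlgebraic x
  obtain ⟨y, hy, hint⟩ := halg.exists_integral_multiple
  obtain ⟨w, hw⟩ : ∃ w : integralClosure ℤ_[p] F, algebraMap ℤ_[p] F y * x = w :=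
    ⟨⟨_, hint⟩, (Algebra.smul_def y x).symm⟩
  have hyK : algebraMap ℤ_[p] F y = algebraMap K F (algebraMap ℤ_[p] K y) :=
    IsScalarTower.algebraMap_apply ℤ_[p] K F y
  have hφy : φ (algebraMap ℤ_[p] F y) = algebraMap K (AlgebraicClosure K) (algebraMap ℤ_[p] K y) := by
    rw [hyK, φ.commutes]
  have hψy : ψ (algebraMap ℤ_[p] F y) = algebraMap K (AlgebraicClosure K) (algebraMap ℤ_[p] K y) := by
    rw [hyK, ψ.commutes]
  have hc : algebraMap K (AlgebraicClosure K) (algebraMap ℤ_[p] K y) ≠ 0 := by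
    intro h0
    apply hy
    have : algebraMap ℤ_[p] K y = 0 := (algebraMap K (AlgebraicClosure K)).injective
      (by rw [h0, map_zero])
    have h1 : algebraMap ℤ_[p] ℚ_[p] y = 0 := (algebraMap ℚ_[p] K).injective
      (by rw [← IsScalarTower.algebraMap_apply ℤ_[p] ℚ_[p] K, this, map_zero])
    exact IsFractionRing.injective ℤ_[p] ℚ_[p] (by rw [h1, map_zero])
  have hwR : ∃ a : RInt p F, algebraMap (RInt p F) F a = (w : F) :=
    ⟨(show RInt p F from w), rfl⟩
  obtain ⟨a, haw⟩ := hwR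
  have hmain : algebraMap K (AlgebraicClosure K) (algebraMap ℤ_[p] K y) * φ x =
      algebraMap K (AlgebraicClosure K) (algebraMap ℤ_[p] K y) * ψ x := by
    calc algebraMap K (AlgebraicClosure K) (algebraMap ℤ_[p] K y) * φ x
        = φ (algebraMap ℤ_[p] F y * x) := by rw [map_mul, hφy]
      _ = φ (algebraMap (RInt p F) F a) := by rw [hw, haw]
      _ = ψ (algebraMap (RInt p F) F a) := hOF a
      _ = ψ (algebraMap ℤ_[p] F y * x) := by rw [haw, hw]
      _ = algebraMap K (AlgebraicClosure K) (algebraMap ℤ_[p] K y) * ψ x := by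
          rw [map_mul, hψy]
  exact mul_left_cancel₀ hc hmain

lemma tensorEval_surjective (ζ : RInt p F) (hζ : Algebra.adjoin (RInt p K) {ζ} = ⊤)
    (x : (RInt p F) ⊗[RInt p K] (RInt p E)) :
    ∃ g : Polynomial (RInt p E), tensorEval p K F E ζ g = x := by
  induction x using TensorProduct.induction_on with
  | zero => exact ⟨0, Polynomial.eval₂_zero _ _⟩
  | tmul a e =>
    have ha : a ∈ Algebra.adjoin (RInt p K) ({ζ} : Set (RInt p F)) := by
      rw [hζ]; exact Algebra.mem_top
    rw [Algebra.adjoin_singleton_eq_range_aeval] at ha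
    obtain ⟨P, hP⟩ := ha
    refine ⟨P.map (algebraMap (RInt p K) (RInt p E)) * Polynomial.C e, ?_⟩
    have hcomp : ((Algebra.TensorProduct.includeRight :
        (RInt p E) →ₐ[RInt p K] (RInt p F) ⊗[RInt p K] (RInt p E)).toRingHom.comp
        (algebraMap (RInt p E) (RInt p E))).comp (algebraMap (RInt p K) (RInt p E)) =
        (Algebra.TensorProduct.includeLeftRingHom :
          RInt p F →+* (RInt p F) ⊗[RInt p K] (RInt p E)).comp
          (algebraMap (RInt p K) (RInt p F)) := by
      ext r
      show (Algebra.TensorProduct.includeRight :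
        (RInt p E) →ₐ[RInt p K] (RInt p F) ⊗[RInt p K] (RInt p E))
          (algebraMap (RInt p K) (RInt p E) r) = _
      rw [AlgHom.commutes]
      show _ = (Algebra.TensorProduct.includeLeft :
        (RInt p F) →ₐ[RInt p K] (RInt p F) ⊗[RInt p K] (RInt p E))
          (algebraMap (RInt p K) (RInt p F) r)
      rw [AlgHom.commutes]
    rw [tensorEval, Polynomial.eval₂_mul, Polynomial.eval₂_C, Polynomial.eval₂_map, hcomp]
    have heval : Polynomial.eval₂
        ((Algebra.TensorProduct.includeLeftRingHom :
          RInt p F →+* (RInt p F) ⊗[RInt p K] (RInt p E)).comp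
          (algebraMap (RInt p K) (RInt p F))) (ζ ⊗ₜ[RInt p K] (1 : RInt p E)) P =
        Algebra.TensorProduct.includeLeftRingHom
          (Polynomial.eval₂ (algebraMap (RInt p K) (RInt p F)) ζ P) := by
      rw [Polynomial.hom_eval₂]
      rfl
    rw [heval]
    have hP' : Polynomial.eval₂ (algebraMap (RInt p K) (RInt p F)) ζ P = a := hP
    rw [hP']
    show (a ⊗ₜ[RInt p K] (1 : RInt p E)) *
      ((1 : RInt p F) ⊗ₜ[RInt p K] e) = a ⊗ₜ[RInt p K] e
    rw [Algebra.TensorProduct.tmul_mul_tmul, mul_one, one_mul]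
  | add x y hx hy =>
    obtain ⟨g1, hg1⟩ := hx
    obtain ⟨g2, hg2⟩ := hy
    refine ⟨g1 + g2, ?_⟩
    rw [tensorEval] at hg1 hg2 ⊢
    rw [Polynomial.eval₂_add, hg1, hg2]

lemma phiComponent_tensorEval (φ : F →ₐ[K] AlgebraicClosure K) (ζ : RInt p F)
    (g : Polynomial (RInt p E)) :
    phiComponent p K F E ιE φ (tensorEval p K F E ζ g) =
      (g.map (OEtoKb p K E ιE)).eval (φ (algebraMap (RInt p F) F ζ)) := by
  rw [tensorEval]
  have h := Polynomial.hom_eval₂ g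
    ((Algebra.TensorProduct.includeRight :
        (RInt p E) →ₐ[RInt p K] (RInt p F) ⊗[RInt p K] (RInt p E)).toRingHom.comp
      (algebraMap (RInt p E) (RInt p E)))
    (phiComponent p K F E ιE φ).toRingHom (ζ ⊗ₜ[RInt p K] (1 : RInt p E))
  have hcomp : ((phiComponent p K F E ιE φ).toRingHom).comp
      ((Algebra.TensorProduct.includeRight :
        (RInt p E) →ₐ[RInt p K] (RInt p F) ⊗[RInt p K] (RInt p E)).toRingHom.comp
      (algebraMap (RInt p E) (RInt p E))) = OEtoKb p K E ιE := by
    ext e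
    show phiComponent p K F E ιE φ ((1 : RInt p F) ⊗ₜ[RInt p K] e) = OEtoKb p K E ιE e
    rw [phiComponent, Algebra.TensorProduct.productMap_apply_tmul, map_one, one_mul]
    rfl
  have hzeta : (phiComponent p K F E ιE φ).toRingHom (ζ ⊗ₜ[RInt p K] (1 : RInt p E)) =
      φ (algebraMap (RInt p F) F ζ) := by
    show phiComponent p K F E ιE φ (ζ ⊗ₜ[RInt p K] (1 : RInt p E)) = _
    rw [phiComponent, Algebra.TensorProduct.productMap_apply_tmul, map_one, mul_one]
    rfl
  show (phiComponent p K F E ιE φ).toRingHom _ = _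
  rw [h, hcomp, hzeta, Polynomial.eval_map]

/-- Lemma 2.4 (3) of the paper. For a subset `A` of `Hom_K(F, K̄)` and a
finite extension `E/K` (embedded in `K̄` via `ιE`) containing the reflex field `E_A`, the
Eisenstein ideal `J_A ⊆ O_F ⊗_{O_K} O_E` is the kernel of the map
`O_F ⊗_{O_K} O_E → ∏_{φ ∈ A} K̄` whose `φ`-component sends `a ⊗ e` to `φ(a)·e`. -/
theorem statement2 [FiniteDimensional K E]
    (A : Finset (F →ₐ[K] AlgebraicClosure K))
    (hE : reflexField K F A ≤ ιE.fieldRange)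
    (ζ : RInt p F) (hζ : Algebra.adjoin (RInt p K) {ζ} = ⊤)
    (Q : Polynomial (RInt p E)) (hQ : IsEisPoly p K F E ιE A ζ Q) :
    ∀ x : (RInt p F) ⊗[RInt p K] (RInt p E),
      x ∈ JIdeal p K F E (RInt p E) Q ζ ↔ ∀ φ ∈ A, phiComponent p K F E ιE φ x = 0 := by
  intro x
  have hι : Function.Injective (OEtoKb p K E ιE) := OEtoKb_injective p K E ιE
  have heE : eElt p K F E (RInt p E) Q ζ = tensorEval p K F E ζ Q := rfl
  have hQm : (Q.map (OEtoKb p K E ιE)).Monic := by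
    rw [hQ]
    exact Polynomial.monic_prod_of_monic _ _ fun φ _ => Polynomial.monic_X_sub_C _
  have hQmonic : Q.Monic := Polynomial.monic_of_injective hι hQm
  constructor
  · intro hx φ hφ
    rw [JIdeal, Ideal.mem_span_singleton] at hx
    obtain ⟨c, rfl⟩ := hx
    rw [map_mul]
    have h0 : phiComponent p K F E ιE φ (eElt p K F E (RInt p E) Q ζ) = 0 := by
      rw [heE, phiComponent_tensorEval, hQ, Polynomial.eval_prod]
      refine Finset.prod_eq_zero hφ ?_
      rw [Polynomial.eval_sub, Polynomial.eval_X, Polynomial.eval_C, sub_self]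
    rw [h0, zero_mul]
  · intro hx
    obtain ⟨g, hg⟩ := tensorEval_surjective p K F E ζ hζ x
    have hroots : ∀ φ ∈ A,
        (g.map (OEtoKb p K E ιE)).eval (φ (algebraMap (RInt p F) F ζ)) = 0 := by
      intro φ hφ
      rw [← phiComponent_tensorEval, hg]
      exact hx φ hφ
    have hdvd : Q.map (OEtoKb p K E ιE) ∣ g.map (OEtoKb p K E ιE) := by
      rw [hQ]
      refine Finset.prod_dvd_of_coprime ?_ ?_
      · intro φ hφ ψ hψ hne
        refine Polynomial.isCoprime_X_sub_C_of_isUnit_sub (IsUnit.mk0 _ ?_)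
        refine sub_ne_zero_of_ne fun hc => hne ?_
        exact emb_eq_of_eq_at p K F ζ hζ φ ψ hc
      · intro φ hφ
        rw [Polynomial.dvd_iff_isRoot]
        exact hroots φ hφ
    obtain ⟨h, rfl⟩ := (Polynomial.map_dvd_map (OEtoKb p K E ιE) hι hQmonic).mp hdvd
    rw [JIdeal, Ideal.mem_span_singleton]
    refine ⟨tensorEval p K F E ζ h, ?_⟩
    rw [← hg, heE, tensorEval, tensorEval, tensorEval, Polynomial.eval₂_mul]

end Eis

end
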